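/- Two-sided value gap bound under density-dependent model error: Let S be a finite nonempty type, let γ be a real number with 0 < γ < 1, let r_max > 0 and set c = r_max/(1−γ). Let T and T̂ be row-stochastic matrices on S, let r : S → ℝ satisfy |r x| ≤ r_max for all x, let V be the value function of (T, r, γ) with |V x| ≤ c for all x, and let μ₀ be a probability vector on S. Let u : S → ℝ, and assume there exist C > 0 and ε_approx ≥ 0 such that for every x in S and every f : S → ℝ with |f y| ≤ 1 for all y, one has |∑_y (T̂ x y − T x y) · f y| ≤ C · (∑_y T̂ x y · u y) + ε_approx. Define the normalized returns η_M = (1−γ) · ∑'_{t≥0} γ^t · ∑_x (μ₀ᵀ T^t) x · r x and η_{M̂} = (1−γ) · ∑'_{t≥0} γ^t · ∑_x (μ₀ᵀ T̂^t) x · r x, and the normalized occupancy ρ̂ⁿ x = (1−γ) · ∑'_{t≥0} γ^t · (μ₀ᵀ T̂^t) x. Then |η_{M̂} − η_M| ≤ γ·c·C · ∑_x ρ̂ⁿ x · (∑_y T̂ x y · u y) + γ·c·ε_approx. -/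

import Mathlib

set_option maxHeartbeats 1000000

private lemma dot_abs_le' {S : Type*} [Fintype S] (ν w B : S → ℝ)
    (hν0 : ∀ x, 0 ≤ ν x) (hw : ∀ x, |w x| ≤ B x) :
    |∑ x, ν x * w x| ≤ ∑ x, ν x * B x := by
  calc |∑ x, ν x * w x| ≤ ∑ x, |ν x * w x| := Finset.abs_sum_le_sum_abs _ _
    _ = ∑ x, ν x * |w x| := by
        refine Finset.sum_congr rfl fun x _ => ?_
        rw [abs_mul, abs_of_nonneg (hν0 x)]
    _ ≤ ∑ x, ν x * B x :=
        Finset.sum_le_sum fun x _ => mul_le_mul_of_nonneg_left (hw x) (hν0 x)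

private lemma dot_abs_le {S : Type*} [Fintype S] (ν w : S → ℝ)
    (hν0 : ∀ x, 0 ≤ ν x) (hν1 : ∑ x, ν x = 1) {B : ℝ} (hw : ∀ x, |w x| ≤ B) :
    |∑ x, ν x * w x| ≤ B := by
  calc |∑ x, ν x * w x| ≤ ∑ x, ν x * B := dot_abs_le' ν w (fun _ => B) hν0 hw
    _ = B := by rw [← Finset.sum_mul, hν1, one_mul]

private lemma vm_pow_stoch {S : Type*} [Fintype S] [DecidableEq S]
    (P : Matrix S S ℝ) (h0 : ∀ x y, 0 ≤ P x y) (h1 : ∀ x, ∑ y, P x y = 1)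
    (μ : S → ℝ) (hμ0 : ∀ x, 0 ≤ μ x) (hμ1 : ∑ x, μ x = 1) (t : ℕ) :
    (∀ x, 0 ≤ Matrix.vecMul μ (P ^ t) x) ∧ ∑ x, Matrix.vecMul μ (P ^ t) x = 1 := by
  induction t with
  | zero => simpa [Matrix.vecMul_one] using ⟨hμ0, hμ1⟩
  | succ n ih =>
    have hstep : ∀ x, Matrix.vecMul μ (P ^ (n+1)) x
        = ∑ y, Matrix.vecMul μ (P ^ n) y * P y x := by
      intro x
      rw [pow_succ, ← Matrix.vecMul_vecMul]
      simp [Matrix.vecMul, dotProduct]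
    constructor
    · intro x
      rw [hstep]
      exact Finset.sum_nonneg fun y _ => mul_nonneg (ih.1 y) (h0 y x)
    · calc ∑ x, Matrix.vecMul μ (P ^ (n+1)) x
          = ∑ x, ∑ y, Matrix.vecMul μ (P ^ n) y * P y x :=
            Finset.sum_congr rfl fun x _ => hstep x
        _ = ∑ y, Matrix.vecMul μ (P ^ n) y * ∑ x, P y x := by
            rw [Finset.sum_comm]
            exact Finset.sum_congr rfl fun y _ => (Finset.mul_sum _ _ _).symm
        _ = 1 := by
            simp only [h1, mul_one]
            exact ih.2

private lemma tsum_telescope_sub (b : ℕ → ℝ) (hb : Summable b) :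
    ∑' t : ℕ, (b t - b (t+1)) = b 0 := by
  have hb1 : Summable (fun t => b (t+1)) := (summable_nat_add_iff 1).mpr hb
  rw [hb.tsum_sub hb1, hb.tsum_eq_zero_add]
  ring

private lemma series_unroll {S : Type*} [Fintype S] [DecidableEq S]
    (γ : ℝ) (hγ0 : 0 < γ) (hγ1 : γ < 1)
    (P : Matrix S S ℝ) (h0 : ∀ x y, 0 ≤ P x y) (h1 : ∀ x, ∑ y, P x y = 1)
    (μ : S → ℝ) (hμ0 : ∀ x, 0 ≤ μ x) (hμ1 : ∑ x, μ x = 1)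
    (r V δ : S → ℝ)
    (hrel : ∀ x, r x = V x - γ * (∑ y, P x y * V y) + γ * δ x)
    (cV : ℝ) (hVbd : ∀ x, |V x| ≤ cV)
    (cδ : ℝ) (hδbd : ∀ x, |δ x| ≤ cδ) :
    ∑' t : ℕ, γ ^ t * ∑ x, Matrix.vecMul μ (P ^ t) x * r x
      = (∑ x, μ x * V x)
        + γ * ∑' t : ℕ, γ ^ t * ∑ x, Matrix.vecMul μ (P ^ t) x * δ x := by
  set m : ℕ → S → ℝ := fun t => Matrix.vecMul μ (P ^ t) with hm
  have hstoch : ∀ t, (∀ x, 0 ≤ m t x) ∧ ∑ x, m t x = 1 :=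
    fun t => vm_pow_stoch P h0 h1 μ hμ0 hμ1 t
  have hsumm : ∀ (w : S → ℝ) (B : ℝ), (∀ x, |w x| ≤ B) →
      Summable (fun t : ℕ => γ ^ t * ∑ x, m t x * w x) := by
    intro w B hw
    apply Summable.of_norm_bounded (g := fun t => B * γ ^ t)
      ((summable_geometric_of_lt_one hγ0.le hγ1).mul_left B)
    intro t
    rw [Real.norm_eq_abs, abs_mul, abs_pow, abs_of_nonneg hγ0.le, mul_comm]
    exact mul_le_mul_of_nonneg_right
      (dot_abs_le _ _ (hstoch t).1 (hstoch t).2 hw) (pow_nonneg hγ0.le t)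
  have key : ∀ t : ℕ, γ ^ t * ∑ x, m t x * r x
      = (γ ^ t * ∑ x, m t x * V x - γ ^ (t+1) * ∑ x, m (t+1) x * V x)
        + γ * (γ ^ t * ∑ x, m t x * δ x) := by
    intro t
    have hnx : ∀ y, m (t+1) y = ∑ x, m t x * P x y := by
      intro y
      rw [hm]
      simp only
      rw [pow_succ, ← Matrix.vecMul_vecMul]
      simp [Matrix.vecMul, dotProduct]
    have hnext : ∑ x, m (t+1) x * V x = ∑ x, m t x * ∑ y, P x y * V y := by
      calc ∑ y, m (t+1) y * V y = ∑ y, (∑ x, m t x * P x y) * V y :=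
            Finset.sum_congr rfl fun y _ => by rw [hnx y]
        _ = ∑ x, m t x * ∑ y, P x y * V y := by
            simp only [Finset.sum_mul, Finset.mul_sum, mul_assoc]
            exact Finset.sum_comm
    have hsum : ∑ x, m t x * r x
        = ∑ x, m t x * V x - γ * ∑ x, m (t+1) x * V x + γ * ∑ x, m t x * δ x := by
      rw [hnext, Finset.mul_sum, Finset.mul_sum, ← Finset.sum_sub_distrib,
        ← Finset.sum_add_distrib]
      refine Finset.sum_congr rfl fun x _ => ?_
      rw [hrel x]; ring
    rw [hsum, pow_succ]
    ring
  have hb : Summable (fun t : ℕ => γ ^ t * ∑ x, m t x * V x) := hsumm V cV hVbd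
  have hδs : Summable (fun t : ℕ => γ ^ t * ∑ x, m t x * δ x) := hsumm δ cδ hδbd
  have hb1 : Summable (fun t : ℕ => γ ^ (t+1) * ∑ x, m (t+1) x * V x) :=
    (summable_nat_add_iff 1).mpr hb
  have htel := tsum_telescope_sub (fun t => γ ^ t * ∑ x, m t x * V x) hb
  calc ∑' t : ℕ, γ ^ t * ∑ x, m t x * r x
      = ∑' t : ℕ, ((γ ^ t * ∑ x, m t x * V x - γ ^ (t+1) * ∑ x, m (t+1) x * V x)
          + γ * (γ ^ t * ∑ x, m t x * δ x)) := tsum_congr key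
    _ = (∑' t : ℕ, (γ ^ t * ∑ x, m t x * V x - γ ^ (t+1) * ∑ x, m (t+1) x * V x))
          + ∑' t : ℕ, γ * (γ ^ t * ∑ x, m t x * δ x) :=
        Summable.tsum_add (hb.sub hb1) (hδs.mul_left γ)
    _ = (∑ x, μ x * V x) + γ * ∑' t : ℕ, γ ^ t * ∑ x, m t x * δ x := by
        rw [htel, tsum_mul_left]
        congr 1
        simp [hm, Matrix.vecMul_one]

/-- Two-sided value gap bound under density-dependent model error. -/
theorem two_sided_value_gap {S : Type*} [Fintype S] [DecidableEq S] [Nonempty S]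
    (γ : ℝ) (hγ0 : 0 < γ) (hγ1 : γ < 1)
    (r_max : ℝ) (hr_max : 0 < r_max)
    (c : ℝ) (hc : c = r_max / (1 - γ))
    (T That : Matrix S S ℝ)
    (hT0 : ∀ x y, 0 ≤ T x y) (hT1 : ∀ x, ∑ y, T x y = 1)
    (hThat0 : ∀ x y, 0 ≤ That x y) (hThat1 : ∀ x, ∑ y, That x y = 1)
    (r : S → ℝ) (hr : ∀ x, |r x| ≤ r_max)
    (V : S → ℝ) (hV : ∀ x, V x = r x + γ * ∑ y, T x y * V y)
    (hVbd : ∀ x, |V x| ≤ c)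
    (μ₀ : S → ℝ) (hμ0 : ∀ x, 0 ≤ μ₀ x) (hμ1 : ∑ x, μ₀ x = 1)
    (u : S → ℝ)
    (C : ℝ) (hC : 0 < C) (ε_approx : ℝ) (hεa : 0 ≤ ε_approx)
    (hmodel : ∀ x, ∀ f : S → ℝ, (∀ y, |f y| ≤ 1) →
      |∑ y, (That x y - T x y) * f y| ≤ C * (∑ y, That x y * u y) + ε_approx)
    (ηM ηMhat : ℝ)
    (hηM : ηM = (1 - γ) * ∑' t : ℕ, γ ^ t * ∑ x, Matrix.vecMul μ₀ (T ^ t) x * r x)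
    (hηMhat : ηMhat =
      (1 - γ) * ∑' t : ℕ, γ ^ t * ∑ x, Matrix.vecMul μ₀ (That ^ t) x * r x)
    (ρhatn : S → ℝ)
    (hρ : ∀ x, ρhatn x = (1 - γ) * ∑' t : ℕ, γ ^ t * Matrix.vecMul μ₀ (That ^ t) x) :
    |ηMhat - ηM| ≤
      γ * c * C * (∑ x, ρhatn x * ∑ y, That x y * u y) + γ * c * ε_approx := by
  have h1γ : 0 < 1 - γ := by linarith
  have hc0 : 0 < c := by rw [hc]; positivity
  set δ : S → ℝ := fun x => ∑ y, (That x y - T x y) * V y with hδ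
  set Bd : S → ℝ := fun x => c * (C * (∑ y, That x y * u y) + ε_approx) with hBd
  -- pointwise model-error bound
  have hδBd : ∀ x, |δ x| ≤ Bd x := by
    intro x
    have hf : ∀ y, |(fun y => V y / c) y| ≤ 1 := by
      intro y
      rw [abs_div, abs_of_pos hc0, div_le_one hc0]
      exact hVbd y
    have h := hmodel x (fun y => V y / c) hf
    have heq : δ x = c * ∑ y, (That x y - T x y) * (V y / c) := by
      rw [hδ, Finset.mul_sum]
      refine Finset.sum_congr rfl fun y _ => ?_
      field_simp
    rw [heq, abs_mul, abs_of_pos hc0, hBd]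
    exact mul_le_mul_of_nonneg_left h hc0.le
  -- uniform bound on δ
  have hδ2c : ∀ x, |δ x| ≤ 2 * c := by
    intro x
    have heq : δ x = (∑ y, That x y * V y) - ∑ y, T x y * V y := by
      rw [hδ, ← Finset.sum_sub_distrib]
      exact Finset.sum_congr rfl fun y _ => by ring
    rw [heq]
    have h1 := dot_abs_le (That x) V (hThat0 x) (hThat1 x) hVbd
    have h2 := dot_abs_le (T x) V (hT0 x) (hT1 x) hVbd
    calc |(∑ y, That x y * V y) - ∑ y, T x y * V y|
        ≤ |∑ y, That x y * V y| + |∑ y, T x y * V y| := abs_sub _ _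
      _ ≤ 2 * c := by linarith
  -- Bellman relations in the form required by series_unroll
  have hrelT : ∀ x, r x = V x - γ * (∑ y, T x y * V y) + γ * (0 : ℝ) := by
    intro x; rw [hV x]; ring
  have hrelThat : ∀ x, r x = V x - γ * (∑ y, That x y * V y) + γ * δ x := by
    intro x
    have heq : δ x = (∑ y, That x y * V y) - ∑ y, T x y * V y := by
      rw [hδ, ← Finset.sum_sub_distrib]
      exact Finset.sum_congr rfl fun y _ => by ring
    rw [hV x, heq]; ring
  -- apply the unrolling lemma to both chains
  have hT_series := series_unroll γ hγ0 hγ1 T hT0 hT1 μ₀ hμ0 hμ1 r V (fun _ => 0)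
    hrelT c hVbd 0 (by intro x; simp)
  have hThat_series := series_unroll γ hγ0 hγ1 That hThat0 hThat1 μ₀ hμ0 hμ1 r V δ
    hrelThat c hVbd (2 * c) hδ2c
  set D : ℝ := ∑' t : ℕ, γ ^ t * ∑ x, Matrix.vecMul μ₀ (That ^ t) x * δ x with hD
  have hηMval : ηM = (1 - γ) * ∑ x, μ₀ x * V x := by
    rw [hηM, hT_series]
    simp
  have hdiff : ηMhat - ηM = (1 - γ) * γ * D := by
    rw [hηMhat, hThat_series, hηMval, hD]
    ring
  set m : ℕ → S → ℝ := fun t => Matrix.vecMul μ₀ (That ^ t) with hm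
  have hstoch : ∀ t, (∀ x, 0 ≤ m t x) ∧ ∑ x, m t x = 1 :=
    fun t => vm_pow_stoch That hThat0 hThat1 μ₀ hμ0 hμ1 t
  have hmle1 : ∀ t x, m t x ≤ 1 := by
    intro t x
    calc m t x ≤ ∑ y, m t y :=
        Finset.single_le_sum (fun y _ => (hstoch t).1 y) (Finset.mem_univ x)
      _ = 1 := (hstoch t).2
  -- a uniform bound for Bd
  have hBdunif : ∃ B : ℝ, ∀ x, |Bd x| ≤ B := by
    refine ⟨Finset.univ.sup' Finset.univ_nonempty (fun x => |Bd x|), fun x => ?_⟩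
    exact Finset.le_sup' (fun x => |Bd x|) (Finset.mem_univ x)
  obtain ⟨B, hB⟩ := hBdunif
  have hgeo : Summable (fun t : ℕ => γ ^ t) := summable_geometric_of_lt_one hγ0.le hγ1
  have hsummBd : Summable (fun t : ℕ => γ ^ t * ∑ x, m t x * Bd x) := by
    apply Summable.of_norm_bounded (g := fun t => B * γ ^ t) (hgeo.mul_left B)
    intro t
    rw [Real.norm_eq_abs, abs_mul, abs_pow, abs_of_nonneg hγ0.le, mul_comm]
    refine mul_le_mul_of_nonneg_right ?_ (pow_nonneg hγ0.le t)
    exact dot_abs_le _ _ (hstoch t).1 (hstoch t).2 hB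
  have hsummδ : Summable (fun t : ℕ => γ ^ t * ∑ x, m t x * δ x) := by
    apply Summable.of_norm_bounded (g := fun t => (2 * c) * γ ^ t) (hgeo.mul_left (2 * c))
    intro t
    rw [Real.norm_eq_abs, abs_mul, abs_pow, abs_of_nonneg hγ0.le, mul_comm]
    refine mul_le_mul_of_nonneg_right ?_ (pow_nonneg hγ0.le t)
    exact dot_abs_le _ _ (hstoch t).1 (hstoch t).2 hδ2c
  -- bound |D| by the Bd series
  have hDle : |D| ≤ ∑' t : ℕ, γ ^ t * ∑ x, m t x * Bd x := by
    have habs : Summable (fun t : ℕ => |γ ^ t * ∑ x, m t x * δ x|) := hsummδ.abs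
    calc |D| ≤ ∑' t : ℕ, |γ ^ t * ∑ x, m t x * δ x| := by
          rw [hD]
          have h := norm_tsum_le_tsum_norm (f := fun t : ℕ => γ ^ t * ∑ x, m t x * δ x)
            (by simpa only [Real.norm_eq_abs] using habs)
          simpa only [Real.norm_eq_abs] using h
      _ ≤ ∑' t : ℕ, γ ^ t * ∑ x, m t x * Bd x := by
          refine Summable.tsum_le_tsum (fun t => ?_) habs hsummBd
          rw [abs_mul, abs_pow, abs_of_nonneg hγ0.le]
          exact mul_le_mul_of_nonneg_left
            (dot_abs_le' (m t) δ Bd (hstoch t).1 hδBd) (pow_nonneg hγ0.le t)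
  -- swap the sums: the Bd-series equals ∑ₓ ρ̂ x * Bd x / (1-γ)
  have hFx : ∀ x : S, Summable (fun t : ℕ => γ ^ t * m t x * Bd x) := by
    intro x
    apply Summable.of_norm_bounded (g := fun t => |Bd x| * γ ^ t) (hgeo.mul_left _)
    intro t
    rw [Real.norm_eq_abs, abs_mul, abs_mul, abs_pow, abs_of_nonneg hγ0.le,
      abs_of_nonneg ((hstoch t).1 x), mul_comm (|Bd x|) (γ ^ t)]
    have : γ ^ t * m t x ≤ γ ^ t * 1 :=
      mul_le_mul_of_nonneg_left (hmle1 t x) (pow_nonneg hγ0.le t)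
    nlinarith [abs_nonneg (Bd x), pow_nonneg hγ0.le t, (hstoch t).1 x,
      le_abs_self (Bd x)]
  have hswap : ∑' t : ℕ, γ ^ t * ∑ x, m t x * Bd x
      = ∑ x, (∑' t : ℕ, γ ^ t * m t x) * Bd x := by
    calc ∑' t : ℕ, γ ^ t * ∑ x, m t x * Bd x
        = ∑' t : ℕ, ∑ x, γ ^ t * m t x * Bd x := by
          refine tsum_congr fun t => ?_
          rw [Finset.mul_sum]
          exact Finset.sum_congr rfl fun x _ => by ring
      _ = ∑ x, ∑' t : ℕ, γ ^ t * m t x * Bd x :=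
          Summable.tsum_finsetSum (fun x _ => hFx x)
      _ = ∑ x, (∑' t : ℕ, γ ^ t * m t x) * Bd x := by
          refine Finset.sum_congr rfl fun x _ => ?_
          rw [← tsum_mul_right]
  have hρval : ∀ x, (∑' t : ℕ, γ ^ t * m t x) = ρhatn x / (1 - γ) := by
    intro x
    rw [hρ x]
    field_simp
    rfl
  -- conclude
  have hfinal : (1 - γ) * (∑' t : ℕ, γ ^ t * ∑ x, m t x * Bd x)
      = ∑ x, ρhatn x * Bd x := by
    rw [hswap, Finset.mul_sum]
    refine Finset.sum_congr rfl fun x _ => ?_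
    rw [hρval x]
    field_simp
  have hBdsplit : ∑ x, ρhatn x * Bd x
      = c * C * (∑ x, ρhatn x * ∑ y, That x y * u y) + c * ε_approx * ∑ x, ρhatn x := by
    rw [hBd, Finset.mul_sum, Finset.mul_sum]
    rw [← Finset.sum_add_distrib]
    refine Finset.sum_congr rfl fun x _ => ?_
    ring
  -- total mass of ρ̂ is 1
  have hρsum : ∑ x, ρhatn x = 1 := by
    have hFx1 : ∀ x : S, Summable (fun t : ℕ => γ ^ t * m t x) := by
      intro x
      apply Summable.of_norm_bounded (g := fun t => γ ^ t) hgeo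
      intro t
      rw [Real.norm_eq_abs, abs_mul, abs_pow, abs_of_nonneg hγ0.le,
        abs_of_nonneg ((hstoch t).1 x)]
      nlinarith [pow_nonneg hγ0.le t, hmle1 t x]
    have : ∑ x, ρhatn x = (1 - γ) * ∑ x, ∑' t : ℕ, γ ^ t * m t x := by
      rw [Finset.mul_sum]
      exact Finset.sum_congr rfl fun x _ => hρ x
    rw [this, ← Summable.tsum_finsetSum (fun x _ => hFx1 x)]
    have : ∑' t : ℕ, ∑ x, γ ^ t * m t x = ∑' t : ℕ, γ ^ t := by
      refine tsum_congr fun t => ?_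
      rw [← Finset.mul_sum, (hstoch t).2, mul_one]
    rw [this, tsum_geometric_of_lt_one hγ0.le hγ1]
    field_simp
  rw [hdiff]
  have hstep : |(1 - γ) * γ * D| ≤ (1 - γ) * γ * ∑' t : ℕ, γ ^ t * ∑ x, m t x * Bd x := by
    rw [abs_mul, abs_of_nonneg (by positivity : (0:ℝ) ≤ (1 - γ) * γ)]
    exact mul_le_mul_of_nonneg_left hDle (by positivity)
  calc |(1 - γ) * γ * D| ≤ (1 - γ) * γ * ∑' t : ℕ, γ ^ t * ∑ x, m t x * Bd x := hstep
    _ = γ * ((1 - γ) * ∑' t : ℕ, γ ^ t * ∑ x, m t x * Bd x) := by ring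
    _ = γ * ∑ x, ρhatn x * Bd x := by rw [hfinal]
    _ = γ * c * C * (∑ x, ρhatn x * ∑ y, That x y * u y) + γ * c * ε_approx := by
        rw [hBdsplit, hρsum]
        ring
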